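/- Let V be a real inner product space, and let a : V × V → ℝ be a symmetric positive semidefinite continuous bilinear form. Let T > 0 and let η, ρ : [0,T] → V be continuously differentiable (in the norm of V) and satisfy, for all t ∈ [0,T] and all v ∈ V, ⟪η'(t), v⟫ + a(η(t), v) = -⟪ρ'(t), v⟫. Then for every t ∈ [0,T], a(η(t), η(t)) ≤ a(η(0), η(0)) + ∫₀^t ‖ρ'(s)‖² ds. -/

import Mathlib

set_option maxHeartbeats 1000000
open Set intervalIntegral
open scoped RealInnerProductSpace

theorem aux_bilin_bound {V : Type*} [NormedAddCommGroup V] [InnerProductSpace ℝ V]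
    (a : V →ₗ[ℝ] V →ₗ[ℝ] ℝ)
    (hacont : Continuous fun p : V × V => a p.1 p.2) :
    ∃ C, ∀ x y : V, ‖a x y‖ ≤ C * ‖x‖ * ‖y‖ := by
  have h0 : ContinuousAt (fun p : V × V => a p.1 p.2) (0, 0) := hacont.continuousAt
  rw [Metric.continuousAt_iff] at h0
  obtain ⟨ε, hε, hball⟩ := h0 1 one_pos
  refine ⟨4 / ε ^ 2, fun x y => ?_⟩
  rcases eq_or_ne x 0 with rfl | hx
  · simp
  rcases eq_or_ne y 0 with rfl | hy
  · simp
  have hxn : 0 < ‖x‖ := norm_pos_iff.mpr hx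
  have hyn : 0 < ‖y‖ := norm_pos_iff.mpr hy
  set x' : V := (ε / 2 / ‖x‖) • x with hx'
  set y' : V := (ε / 2 / ‖y‖) • y with hy'
  have hd : dist ((x', y') : V × V) (0, 0) < ε := by
    rw [Prod.dist_eq]
    simp only [dist_zero_right, hx', hy', norm_smul]
    rw [Real.norm_eq_abs, Real.norm_eq_abs, abs_of_pos (by positivity), abs_of_pos (by positivity)]
    rw [div_mul_cancel₀ _ (ne_of_gt hxn), div_mul_cancel₀ _ (ne_of_gt hyn)]
    simp only [max_self]
    linarith
  have hb := hball hd
  simp only [map_zero, LinearMap.zero_apply, dist_zero_right] at hb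
  have hval : a x' y' = (ε / 2 / ‖x‖) * ((ε / 2 / ‖y‖) * a x y) := by
    simp only [hx', hy', map_smul, LinearMap.smul_apply, smul_eq_mul]
    ring
  rw [hval] at hb
  have h2 : ‖(ε / 2 / ‖x‖) * ((ε / 2 / ‖y‖) * a x y)‖
      = (ε / 2 / ‖x‖) * ((ε / 2 / ‖y‖) * ‖a x y‖) := by
    rw [norm_mul, norm_mul, Real.norm_eq_abs (ε / 2 / ‖x‖), Real.norm_eq_abs (ε / 2 / ‖y‖),
      abs_of_pos (by positivity), abs_of_pos (by positivity)]
  rw [h2] at hb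
  have h3 : (ε / 2 / ‖x‖) * ((ε / 2 / ‖y‖) * ‖a x y‖)
      = (ε ^ 2 * ‖a x y‖) / (4 * (‖x‖ * ‖y‖)) := by
    field_simp
    ring
  rw [h3, div_lt_one (by positivity)] at hb
  have hε2 : (0:ℝ) < ε ^ 2 := by positivity
  rw [div_mul_eq_mul_div, div_mul_eq_mul_div, le_div_iff₀ hε2]
  nlinarith [norm_nonneg (a x y)]

/-- Semidiscrete energy-norm error estimate: if `⟪η', v⟫ + a(η, v) = -⟪ρ', v⟫` on `[0,T]`,
then `a(η(t), η(t)) ≤ a(η(0), η(0)) + ∫₀ᵗ ‖ρ'(s)‖² ds`. -/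
theorem semidiscrete_energy_stability
    {V : Type*} [NormedAddCommGroup V] [InnerProductSpace ℝ V]
    (a : V →ₗ[ℝ] V →ₗ[ℝ] ℝ)
    (hsym : ∀ x y : V, a x y = a y x)
    (hpos : ∀ v : V, 0 ≤ a v v)
    (hacont : Continuous fun p : V × V => a p.1 p.2)
    (T : ℝ) (hT : 0 < T)
    (η η' ρ ρ' : ℝ → V)
    (hη : ∀ t ∈ Icc (0 : ℝ) T, HasDerivWithinAt η (η' t) (Icc 0 T) t)
    (hη' : ContinuousOn η' (Icc 0 T))
    (hρ : ∀ t ∈ Icc (0 : ℝ) T, HasDerivWithinAt ρ (ρ' t) (Icc 0 T) t)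
    (hρ' : ContinuousOn ρ' (Icc 0 T))
    (heq : ∀ t ∈ Icc (0 : ℝ) T, ∀ v : V, ⟪η' t, v⟫ + a (η t) v = -⟪ρ' t, v⟫) :
    ∀ t ∈ Icc (0 : ℝ) T,
      a (η t) (η t) ≤ a (η 0) (η 0) + ∫ s in (0 : ℝ)..t, ‖ρ' s‖ ^ 2 := by
  obtain ⟨C, hC⟩ := aux_bilin_bound a hacont
  set B : V →L[ℝ] V →L[ℝ] ℝ := a.mkContinuousOfExistsBound₂ ⟨C, hC⟩ with hB
  have hBa : ∀ x y : V, B x y = a x y := fun x y => rfl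
  intro t ht
  obtain ⟨ht0, htT⟩ := ht
  -- continuity of η on Icc 0 T
  have hηc : ContinuousOn η (Icc 0 T) := fun s hs => (hη s hs).continuousWithinAt
  -- f and its derivative
  set f : ℝ → ℝ := fun s => a (η s) (η s) with hf
  set f' : ℝ → ℝ := fun s => 2 * a (η s) (η' s) with hf'
  have hderiv : ∀ s ∈ Icc (0 : ℝ) T, HasDerivWithinAt f (f' s) (Icc 0 T) s := by
    intro s hs
    have hc : HasDerivWithinAt (fun u => B (η u)) (B (η' s)) (Icc 0 T) s :=
      B.hasFDerivAt.comp_hasDerivWithinAt s (hη s hs)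
    have := hc.clm_apply (hη s hs)
    have h2 : B (η' s) (η s) + B (η s) (η' s) = f' s := by
      simp only [hBa, hf']
      rw [hsym (η s) (η' s)]
      ring
    rw [h2] at this
    exact this
  have hfc : ContinuousOn f (Icc 0 T) := fun s hs => (hderiv s hs).continuousWithinAt
  have hf'c : ContinuousOn f' (Icc 0 T) := by
    have : ContinuousOn (fun s => a (η s) (η' s)) (Icc 0 T) :=
      hacont.comp_continuousOn (hηc.prodMk hη')
    exact continuousOn_const.mul this
  -- FTC
  have hint : IntervalIntegrable f' MeasureTheory.volume 0 t := by
    apply ContinuousOn.intervalIntegrable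
    rw [uIcc_of_le ht0]
    exact hf'c.mono (Icc_subset_Icc le_rfl htT)
  have hftc : ∫ s in (0 : ℝ)..t, f' s = f t - f 0 := by
    apply integral_eq_sub_of_hasDeriv_right_of_le ht0
    · exact hfc.mono (Icc_subset_Icc le_rfl htT)
    · intro x hx
      have hxT : x ∈ Icc (0 : ℝ) T := ⟨le_of_lt hx.1, le_of_lt (lt_of_lt_of_le hx.2 htT)⟩
      have hnhds : Icc (0 : ℝ) T ∈ nhds x :=
        Icc_mem_nhds hx.1 (lt_of_lt_of_le hx.2 htT)
      exact ((hderiv x hxT).hasDerivAt hnhds).hasDerivWithinAt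
    · exact hint
  -- pointwise bound f' s ≤ ‖ρ' s‖^2
  have hpt : ∀ s ∈ Icc (0 : ℝ) t, f' s ≤ ‖ρ' s‖ ^ 2 := by
    intro s hs
    have hsT : s ∈ Icc (0 : ℝ) T := ⟨hs.1, le_trans hs.2 htT⟩
    have h1 := heq s hsT (η' s)
    have h2 : ⟪η' s, η' s⟫ = ‖η' s‖ ^ 2 := real_inner_self_eq_norm_sq (η' s)
    have h3 : |⟪ρ' s, η' s⟫| ≤ ‖ρ' s‖ * ‖η' s‖ := abs_real_inner_le_norm _ _
    have h4 : -⟪ρ' s, η' s⟫ ≤ ‖ρ' s‖ * ‖η' s‖ := by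
      have := neg_abs_le (⟪ρ' s, η' s⟫)
      linarith [abs_nonneg (⟪ρ' s, η' s⟫)]
    rw [h2] at h1
    have h5 : 0 ≤ ‖ρ' s‖ ^ 2 - 2 * (‖ρ' s‖ * ‖η' s‖) + ‖η' s‖ ^ 2 := by
      nlinarith [sq_nonneg (‖ρ' s‖ - ‖η' s‖)]
    show 2 * a (η s) (η' s) ≤ ‖ρ' s‖ ^ 2
    linarith [sq_nonneg ‖η' s‖]
  -- integrability of ‖ρ'‖^2
  have hint2 : IntervalIntegrable (fun s => ‖ρ' s‖ ^ 2) MeasureTheory.volume 0 t := by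
    apply ContinuousOn.intervalIntegrable
    rw [uIcc_of_le ht0]
    exact ((hρ'.mono (Icc_subset_Icc le_rfl htT)).norm.pow 2)
  have hmono : ∫ s in (0 : ℝ)..t, f' s ≤ ∫ s in (0 : ℝ)..t, ‖ρ' s‖ ^ 2 :=
    integral_mono_on ht0 hint hint2 hpt
  have : f t - f 0 ≤ ∫ s in (0 : ℝ)..t, ‖ρ' s‖ ^ 2 := hftc ▸ hmono
  simp only [hf] at this
  linarith
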